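/- Let Φ, Ψ ∈ 𝓛. Then Ψ(x/Φ(x)) ≍ Ψ(x) for all x ≥ 0, i.e., there exists C > 0 depending only on Φ and Ψ such that C⁻¹·Ψ(x) ≤ Ψ(x/Φ(x)) ≤ C·Ψ(x) for all x ≥ 0. -/

import Mathlib

open MeasureTheory Real Set

/-- `Ψ` is essentially increasing on `[0,∞)`. -/
def EssInc (Ψ : ℝ → ℝ) : Prop := ∃ C > (0:ℝ), ∀ x y : ℝ, 0 ≤ x → x ≤ y → Ψ x ≤ C * Ψ y

/-- `Ψ` is essentially decreasing on `[0,∞)`. -/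
def EssDec (Ψ : ℝ → ℝ) : Prop := ∃ C > (0:ℝ), ∀ x y : ℝ, 0 ≤ x → x ≤ y → Ψ y ≤ C * Ψ x

/-- The doubling property `Ψ(x) ≍ Ψ(x²)` on `[0,∞)`. -/
def Doubling (Ψ : ℝ → ℝ) : Prop :=
  ∃ c > (0:ℝ), ∃ C > (0:ℝ), ∀ x : ℝ, 0 ≤ x → c * Ψ (x ^ 2) ≤ Ψ x ∧ Ψ x ≤ C * Ψ (x ^ 2)

/-- The class `𝓛`: positive, essentially monotonic, doubling. -/
def InL (Ψ : ℝ → ℝ) : Prop :=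
  (∀ x : ℝ, 0 ≤ x → 0 < Ψ x) ∧ (EssInc Ψ ∨ EssDec Ψ) ∧ Doubling Ψ

lemma aux_inv_le {a b A : ℝ} (ha : 0 < a) (hb : 0 < b) (h : a ≤ A * b) : b⁻¹ ≤ A * a⁻¹ := by
  have h1 : (0:ℝ) < a⁻¹ * b⁻¹ := by positivity
  have h2 := mul_le_mul_of_nonneg_left h h1.le
  have e1 : a⁻¹ * b⁻¹ * a = b⁻¹ := by field_simp
  have e2 : a⁻¹ * b⁻¹ * (A * b) = A * a⁻¹ := by field_simp
  linarith

lemma aux_div_le {a b A : ℝ} (hb : 0 < b) (hA : 0 < A) (h : A * b ≤ a) : b ≤ A⁻¹ * a := by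
  have h1 : (0:ℝ) < A⁻¹ := by positivity
  have h2 := mul_le_mul_of_nonneg_left h h1.le
  have e1 : A⁻¹ * (A * b) = b := by field_simp
  linarith

lemma aux_sq_le_pow (m : ℕ) : (m+12)^2 ≤ 2^(m+9) := by
  induction m with
  | zero => norm_num
  | succ m ih =>
    have h2 : 2^(m+1+9) = 2^(m+9) + 2^(m+9) := by ring
    have h3 : (m+1+12)^2 = (m+12)^2 + (2*m+25) := by ring
    have h4 : 2*m+25 ≤ (m+12)^2 := by nlinarith
    omega

lemma aux_key_nat (k n : ℕ) (hk : 1 ≤ k) (hn : max k 11 ≤ n) : k*(n+1) ≤ 2^(n-2) := by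
  have hk' : k ≤ n := le_trans (le_max_left _ _) hn
  have h11 : 11 ≤ n := le_trans (le_max_right _ _) hn
  obtain ⟨m, rfl⟩ : ∃ m, n = m + 11 := ⟨n - 11, by omega⟩
  have h1 : k*(m+11+1) ≤ (m+12)^2 := by nlinarith
  have h2 : (m+12)^2 ≤ 2^(m+9) := aux_sq_le_pow m
  have h3 : m + 11 - 2 = m + 9 := by omega
  rw [h3]; omega

/-- The pointwise inverse of a function in `𝓛` is in `𝓛`. -/
lemma aux_inv_inL {Φ : ℝ → ℝ} (h : InL Φ) : InL (fun x => (Φ x)⁻¹) := by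
  obtain ⟨hpos, hmono, c, hc, C, hC, hd⟩ := h
  refine ⟨fun x hx => inv_pos.mpr (hpos x hx), ?_, ?_⟩
  · rcases hmono with ⟨A, hA, hm⟩ | ⟨A, hA, hm⟩
    · exact Or.inr ⟨A, hA, fun x y hx hxy =>
        aux_inv_le (hpos x hx) (hpos y (hx.trans hxy)) (hm x y hx hxy)⟩
    · exact Or.inl ⟨A, hA, fun x y hx hxy =>
        aux_inv_le (hpos y (hx.trans hxy)) (hpos x hx) (hm x y hx hxy)⟩
  · refine ⟨C⁻¹, by positivity, c⁻¹, by positivity, fun x hx => ?_⟩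
    have hx2 : (0:ℝ) ≤ x^2 := sq_nonneg x
    have p1 := hpos x hx
    have p2 := hpos (x^2) hx2
    obtain ⟨hd1, hd2⟩ := hd x hx
    constructor
    · have h1 : (Φ (x^2))⁻¹ ≤ C * (Φ x)⁻¹ := aux_inv_le p1 p2 hd2
      calc C⁻¹ * (Φ (x^2))⁻¹ ≤ C⁻¹ * (C * (Φ x)⁻¹) :=
            mul_le_mul_of_nonneg_left h1 (by positivity)
        _ = (Φ x)⁻¹ := by field_simp
    · have h1 : Φ (x^2) ≤ c⁻¹ * Φ x := aux_div_le p2 hc hd1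
      exact aux_inv_le p2 p1 h1

/-- Polynomial (square-root) upper bound, eventually, for members of `𝓛`. -/
lemma aux_upper {Φ : ℝ → ℝ} (h : InL Φ) :
    ∃ x₀ : ℝ, 2 ≤ x₀ ∧ ∀ x, x₀ ≤ x → Φ x ≤ Real.sqrt x := by
  obtain ⟨hpos, hmono, c, hc, C, hC, hd⟩ := h
  rcases hmono with ⟨A, hA, hm⟩ | ⟨A, hA, hm⟩
  · -- essentially increasing: the hard case
    set q : ℝ := max c⁻¹ 1 with hqdef
    have hq1 : (1:ℝ) ≤ q := le_max_right _ _
    have hq0 : (0:ℝ) < q := lt_of_lt_of_le one_pos hq1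
    have hsq : ∀ y : ℝ, 0 ≤ y → Φ (y^2) ≤ q * Φ y := by
      intro y hy
      have h1 := (hd y hy).1
      have h2 : Φ (y^2) ≤ c⁻¹ * Φ y := aux_div_le (hpos (y^2) (sq_nonneg y)) hc h1
      calc Φ (y^2) ≤ c⁻¹ * Φ y := h2
        _ ≤ q * Φ y := mul_le_mul_of_nonneg_right (le_max_left _ _) (hpos y hy).le
    have hB0 : 0 < A * Φ 2 := mul_pos hA (hpos 2 (by norm_num))
    have key : ∀ n : ℕ, ∀ x : ℝ, 1 ≤ x → x ≤ (2:ℝ)^(2^n) → Φ x ≤ q^n * (A * Φ 2) := by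
      intro n
      induction n with
      | zero =>
        intro x hx1 hx2
        norm_num at hx2 ⊢
        exact hm x 2 (by linarith) hx2
      | succ n ih =>
        intro x hx1 hx2
        have hx0 : (0:ℝ) ≤ x := by linarith
        set s := Real.sqrt x with hs
        have hs1 : 1 ≤ s := by
          rw [show (1:ℝ) = Real.sqrt 1 by simp]
          exact Real.sqrt_le_sqrt hx1
        have hssq : s^2 = x := Real.sq_sqrt hx0
        have hsle : s ≤ (2:ℝ)^(2^n) := by
          have h1 : x ≤ ((2:ℝ)^(2^n))^2 := by
            rw [← pow_mul]
            have he : 2^n * 2 = 2^(n+1) := by ring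
            rw [he]; exact hx2
          calc s ≤ Real.sqrt (((2:ℝ)^(2^n))^2) := Real.sqrt_le_sqrt h1
            _ = (2:ℝ)^(2^n) := Real.sqrt_sq (by positivity)
        have h1 := hsq s (by linarith)
        rw [hssq] at h1
        have h2 := ih s hs1 hsle
        calc Φ x ≤ q * Φ s := h1
          _ ≤ q * (q^n * (A * Φ 2)) := mul_le_mul_of_nonneg_left h2 hq0.le
          _ = q^(n+1) * (A * Φ 2) := by ring
    obtain ⟨k₀, hk₀⟩ := pow_unbounded_of_one_lt (max q (A * Φ 2)) (one_lt_two : (1:ℝ) < 2)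
    set k : ℕ := k₀ + 1 with hkdef
    have hk1 : 1 ≤ k := Nat.le_add_left 1 k₀
    have h2k : (2:ℝ)^k₀ ≤ 2^k := pow_le_pow_right₀ one_le_two (Nat.le_succ k₀)
    have hkq : q ≤ (2:ℝ)^k := le_trans (le_trans (le_max_left _ _) hk₀.le) h2k
    have hkB : A * Φ 2 ≤ (2:ℝ)^k := le_trans (le_trans (le_max_right _ _) hk₀.le) h2k
    set K : ℕ := max k 11 with hKdef
    refine ⟨(2:ℝ)^(2^K), ?_, ?_⟩
    · calc (2:ℝ) = 2^1 := (pow_one 2).symm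
        _ ≤ 2^(2^K) := pow_le_pow_right₀ one_le_two Nat.one_le_two_pow
    intro x hx
    have hx1 : (1:ℝ) ≤ x := by
      have : (2:ℝ) ≤ (2:ℝ)^(2^K) := by
        calc (2:ℝ) = 2^1 := (pow_one 2).symm
          _ ≤ 2^(2^K) := pow_le_pow_right₀ one_le_two Nat.one_le_two_pow
      linarith
    have hx0 : (0:ℝ) ≤ x := by linarith
    have hex : ∃ n : ℕ, x ≤ (2:ℝ)^(2^n) := by
      obtain ⟨m, hm'⟩ := exists_nat_gt x
      refine ⟨m, ?_⟩
      have h1 : (m:ℝ) ≤ 2^m := by exact_mod_cast (Nat.lt_two_pow_self (n := m)).le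
      have h2 : (2:ℝ)^m ≤ 2^(2^m) := pow_le_pow_right₀ one_le_two (Nat.lt_two_pow_self (n := m)).le
      linarith
    set n := Nat.find hex with hndef
    have hxn : x ≤ (2:ℝ)^(2^n) := Nat.find_spec hex
    have hKn : K ≤ n := by
      by_contra hlt
      push_neg at hlt
      have hnn : 2^n < 2^K := Nat.pow_lt_pow_right one_lt_two hlt
      have : (2:ℝ)^(2^n) < 2^(2^K) :=
        pow_lt_pow_right₀ one_lt_two hnn
      linarith
    have h11n : 11 ≤ n := le_trans (le_max_right _ _) hKn
    have hmin : (2:ℝ)^(2^(n-1)) < x := by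
      have hlt := Nat.find_min hex (show n-1 < n by omega)
      push_neg at hlt
      exact hlt
    have hsqrt : (2:ℝ)^(2^(n-2)) ≤ Real.sqrt x := by
      rw [Real.le_sqrt (by positivity) hx0, ← pow_mul]
      have he : 2^(n-2)*2 = 2^(n-1) := by
        have h' : n - 1 = (n-2) + 1 := by omega
        rw [h', pow_succ]
      rw [he]
      exact hmin.le
    have h1 : Φ x ≤ q^n * (A * Φ 2) := key n x hx1 hxn
    have h2 : q^n * (A * Φ 2) ≤ ((2:ℝ)^k)^n * 2^k := by
      apply mul_le_mul (pow_le_pow_left₀ hq0.le hkq n) hkB hB0.le (by positivity)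
    have h3 : ((2:ℝ)^k)^n * 2^k = 2^(k*(n+1)) := by
      have he : k*(n+1) = k*n + k := by ring
      rw [← pow_mul, ← pow_add, he]
    have h4 : (2:ℝ)^(k*(n+1)) ≤ 2^(2^(n-2)) :=
      pow_le_pow_right₀ one_le_two (aux_key_nat k n hk1 hKn)
    calc Φ x ≤ q^n * (A * Φ 2) := h1
      _ ≤ ((2:ℝ)^k)^n * 2^k := h2
      _ = 2^(k*(n+1)) := h3
      _ ≤ 2^(2^(n-2)) := h4
      _ ≤ Real.sqrt x := hsqrt
  · -- essentially decreasing: Φ is bounded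
    refine ⟨max 2 ((A * Φ 0)^2), le_max_left _ _, fun x hx => ?_⟩
    have hx2 : (2:ℝ) ≤ x := le_trans (le_max_left _ _) hx
    have hb : Φ x ≤ A * Φ 0 := hm 0 x le_rfl (by linarith)
    have h0 : (0:ℝ) ≤ A * Φ 0 := (mul_pos hA (hpos 0 le_rfl)).le
    have hs : A * Φ 0 ≤ Real.sqrt x := by
      have h1 := Real.sqrt_le_sqrt (le_trans (le_max_right _ _) hx)
      rwa [Real.sqrt_sq h0] at h1
    linarith

lemma aux_lower {Φ : ℝ → ℝ} (h : InL Φ) :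
    ∃ x₀ : ℝ, 2 ≤ x₀ ∧ ∀ x, x₀ ≤ x → (Φ x)⁻¹ ≤ Real.sqrt x :=
  aux_upper (aux_inv_inL h)

lemma aux_div_le' {a b A : ℝ} (hA : 0 < A) (h : a ≤ A * b) : A⁻¹ * a ≤ b := by
  have h2 := mul_le_mul_of_nonneg_left h (inv_pos.mpr hA).le
  have e1 : A⁻¹ * (A * b) = b := by field_simp
  linarith

theorem stmt4 (Φ Ψ : ℝ → ℝ) (hΦ : InL Φ) (hΨ : InL Ψ) :
    ∃ C > (0:ℝ), ∀ x : ℝ, 0 ≤ x →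
      C⁻¹ * Ψ x ≤ Ψ (x / Φ x) ∧ Ψ (x / Φ x) ≤ C * Ψ x := by
  obtain ⟨x₀, hx₀2, hup⟩ := aux_upper hΦ
  obtain ⟨x₁, hx₁2, hlow⟩ := aux_lower hΦ
  obtain ⟨hΦpos, hΦmono, _⟩ := hΦ
  obtain ⟨hΨpos, hΨmono, cΨ, hcΨ, CΨ, hCΨ, hdΨ⟩ := hΨ
  set X := max x₀ x₁ with hXdef
  have hX2 : (2:ℝ) ≤ X := le_trans hx₀2 (le_max_left _ _)
  -- the region x ≥ X
  have far : ∃ D > (0:ℝ), ∀ x, X ≤ x →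
      Ψ (x / Φ x) ≤ D * Ψ x ∧ Ψ x ≤ D * Ψ (x / Φ x) := by
    have geom : ∀ x, X ≤ x → Real.sqrt x ≤ x / Φ x ∧ x / Φ x ≤ x^2 ∧ (0:ℝ) ≤ x := by
      intro x hx
      have hx0 : (0:ℝ) ≤ x := le_trans (by linarith) hx
      have hx1 : (1:ℝ) ≤ x := by linarith
      have hp := hΦpos x hx0
      have h1 : Φ x ≤ Real.sqrt x := hup x (le_trans (le_max_left _ _) hx)
      have h2 : (Φ x)⁻¹ ≤ Real.sqrt x := hlow x (le_trans (le_max_right _ _) hx)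
      refine ⟨?_, ?_, hx0⟩
      · rw [le_div_iff₀ hp]
        calc Real.sqrt x * Φ x ≤ Real.sqrt x * Real.sqrt x :=
              mul_le_mul_of_nonneg_left h1 (Real.sqrt_nonneg x)
          _ = x := Real.mul_self_sqrt hx0
      · rw [div_eq_mul_inv]
        calc x * (Φ x)⁻¹ ≤ x * Real.sqrt x := mul_le_mul_of_nonneg_left h2 hx0
          _ ≤ x * x := by
              have hss : Real.sqrt x ≤ x := by
                have h' : x ≤ x^2 := by nlinarith
                calc Real.sqrt x ≤ Real.sqrt (x^2) := Real.sqrt_le_sqrt h'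
                  _ = x := Real.sqrt_sq hx0
              exact mul_le_mul_of_nonneg_left hss hx0
          _ = x^2 := (sq x).symm
    rcases hΨmono with ⟨A, hA, hmΨ⟩ | ⟨A, hA, hmΨ⟩
    · -- Ψ essentially increasing
      refine ⟨A * cΨ⁻¹, by positivity, fun x hx => ?_⟩
      obtain ⟨g1, g2, hx0⟩ := geom x hx
      have ht0 : (0:ℝ) ≤ x / Φ x := le_trans (Real.sqrt_nonneg x) g1
      have hdx := hdΨ x hx0
      have hds := hdΨ (Real.sqrt x) (Real.sqrt_nonneg x)
      rw [Real.sq_sqrt hx0] at hds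
      constructor
      · have u1 : Ψ (x / Φ x) ≤ A * Ψ (x^2) := hmΨ _ _ ht0 g2
        have u2 : Ψ (x^2) ≤ cΨ⁻¹ * Ψ x := aux_div_le (hΨpos _ (sq_nonneg x)) hcΨ hdx.1
        calc Ψ (x / Φ x) ≤ A * Ψ (x^2) := u1
          _ ≤ A * (cΨ⁻¹ * Ψ x) := mul_le_mul_of_nonneg_left u2 hA.le
          _ = A * cΨ⁻¹ * Ψ x := by ring
      · have u1 : Ψ (Real.sqrt x) ≤ A * Ψ (x / Φ x) := hmΨ _ _ (Real.sqrt_nonneg x) g1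
        have u2 : Ψ x ≤ cΨ⁻¹ * Ψ (Real.sqrt x) := aux_div_le (hΨpos x hx0) hcΨ hds.1
        calc Ψ x ≤ cΨ⁻¹ * Ψ (Real.sqrt x) := u2
          _ ≤ cΨ⁻¹ * (A * Ψ (x / Φ x)) :=
              mul_le_mul_of_nonneg_left u1 (by positivity)
          _ = A * cΨ⁻¹ * Ψ (x / Φ x) := by ring
    · -- Ψ essentially decreasing
      refine ⟨A * CΨ, by positivity, fun x hx => ?_⟩
      obtain ⟨g1, g2, hx0⟩ := geom x hx
      have ht0 : (0:ℝ) ≤ x / Φ x := le_trans (Real.sqrt_nonneg x) g1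
      have hdx := hdΨ x hx0
      have hds := hdΨ (Real.sqrt x) (Real.sqrt_nonneg x)
      rw [Real.sq_sqrt hx0] at hds
      constructor
      · have u1 : Ψ (x / Φ x) ≤ A * Ψ (Real.sqrt x) := hmΨ _ _ (Real.sqrt_nonneg x) g1
        calc Ψ (x / Φ x) ≤ A * Ψ (Real.sqrt x) := u1
          _ ≤ A * (CΨ * Ψ x) := mul_le_mul_of_nonneg_left hds.2 hA.le
          _ = A * CΨ * Ψ x := by ring
      · have u1 : Ψ (x^2) ≤ A * Ψ (x / Φ x) := hmΨ _ _ ht0 g2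
        calc Ψ x ≤ CΨ * Ψ (x^2) := hdx.2
          _ ≤ CΨ * (A * Ψ (x / Φ x)) := mul_le_mul_of_nonneg_left u1 hCΨ.le
          _ = A * CΨ * Ψ (x / Φ x) := by ring
  -- the region 0 ≤ x ≤ X
  have near : ∃ D > (0:ℝ), ∀ x, 0 ≤ x → x ≤ X →
      Ψ (x / Φ x) ≤ D * Ψ x ∧ Ψ x ≤ D * Ψ (x / Φ x) := by
    obtain ⟨m, hm0, hmΦ⟩ : ∃ m > (0:ℝ), ∀ x, 0 ≤ x → x ≤ X → m ≤ Φ x := by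
      rcases hΦmono with ⟨A, hA, hmm⟩ | ⟨A, hA, hmm⟩
      · exact ⟨A⁻¹ * Φ 0, mul_pos (inv_pos.mpr hA) (hΦpos 0 le_rfl),
          fun x hx _ => aux_div_le' hA (hmm 0 x le_rfl hx)⟩
      · exact ⟨A⁻¹ * Φ X, mul_pos (inv_pos.mpr hA) (hΦpos X (by linarith)),
          fun x hx hxX => aux_div_le' hA (hmm x X hx hxX)⟩
    set Z := max X (X / m) with hZdef
    have hZX : X ≤ Z := le_max_left _ _
    have hZ0 : (0:ℝ) ≤ Z := by linarith
    obtain ⟨l, u, hl0, hbnd⟩ : ∃ l u : ℝ, 0 < l ∧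
        ∀ s, 0 ≤ s → s ≤ Z → l ≤ Ψ s ∧ Ψ s ≤ u := by
      rcases hΨmono with ⟨A, hA, hmm⟩ | ⟨A, hA, hmm⟩
      · exact ⟨A⁻¹ * Ψ 0, A * Ψ Z, mul_pos (inv_pos.mpr hA) (hΨpos 0 le_rfl),
          fun s hs0 hsZ => ⟨aux_div_le' hA (hmm 0 s le_rfl hs0), hmm s Z hs0 hsZ⟩⟩
      · exact ⟨A⁻¹ * Ψ Z, A * Ψ 0, mul_pos (inv_pos.mpr hA) (hΨpos Z hZ0),
          fun s hs0 hsZ => ⟨aux_div_le' hA (hmm s Z hs0 hsZ), hmm 0 s le_rfl hs0⟩⟩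
    have hu0 : 0 < u :=
      lt_of_lt_of_le hl0 (le_trans (hbnd 0 le_rfl hZ0).1 (hbnd 0 le_rfl hZ0).2)
    refine ⟨u * l⁻¹, by positivity, fun x hx0 hxX => ?_⟩
    have hp := hΦpos x hx0
    have ht0 : (0:ℝ) ≤ x / Φ x := div_nonneg hx0 hp.le
    have htZ : x / Φ x ≤ Z := by
      have h1 : x / Φ x ≤ x / m := by gcongr; exact hmΦ x hx0 hxX
      have h2 : x / m ≤ X / m := by gcongr
      exact le_trans h1 (le_trans h2 (le_max_right _ _))
    have hxZ : x ≤ Z := le_trans hxX hZX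
    obtain ⟨hlx, hux⟩ := hbnd x hx0 hxZ
    obtain ⟨hlt, hut⟩ := hbnd _ ht0 htZ
    constructor
    · calc Ψ (x / Φ x) ≤ u := hut
        _ = u * l⁻¹ * l := by field_simp
        _ ≤ u * l⁻¹ * Ψ x := mul_le_mul_of_nonneg_left hlx (by positivity)
    · calc Ψ x ≤ u := hux
        _ = u * l⁻¹ * l := by field_simp
        _ ≤ u * l⁻¹ * Ψ (x / Φ x) := mul_le_mul_of_nonneg_left hlt (by positivity)
  obtain ⟨D₁, hD₁, hfar⟩ := far
  obtain ⟨D₂, hD₂, hnear⟩ := near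
  have hC0 : (0:ℝ) < max D₁ D₂ := lt_of_lt_of_le hD₁ (le_max_left _ _)
  refine ⟨max D₁ D₂, hC0, fun x hx => ?_⟩
  have hp := hΦpos x hx
  have ht0 : (0:ℝ) ≤ x / Φ x := div_nonneg hx hp.le
  have key : Ψ (x / Φ x) ≤ (max D₁ D₂) * Ψ x ∧ Ψ x ≤ (max D₁ D₂) * Ψ (x / Φ x) := by
    rcases le_total x X with h | h
    · obtain ⟨a, b⟩ := hnear x hx h
      exact ⟨a.trans (mul_le_mul_of_nonneg_right (le_max_right _ _) (hΨpos x hx).le),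
        b.trans (mul_le_mul_of_nonneg_right (le_max_right _ _) (hΨpos _ ht0).le)⟩
    · obtain ⟨a, b⟩ := hfar x h
      exact ⟨a.trans (mul_le_mul_of_nonneg_right (le_max_left _ _) (hΨpos x hx).le),
        b.trans (mul_le_mul_of_nonneg_right (le_max_left _ _) (hΨpos _ ht0).le)⟩
  exact ⟨aux_div_le' hC0 key.2, key.1⟩
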